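/- Under the hypotheses of the previous statement, at every point t where G is differentiable and t is a continuity point of F, one has F(t) = G(t) + (t/α) G'(t); equivalently G'(t) = α t^{-α-1} H(t). -/

import Mathlib

open MeasureTheory Real Filter Set Topology

lemma wk_rpow_integrableOn (ν : Measure ℝ) [IsProbabilityMeasure ν] (α : ℝ) (hα : 0 < α)
    (a b : ℝ) (ha : 0 ≤ a) :
    IntegrableOn (fun x => x ^ α) (Set.Ioc a b) ν := by
  apply Measure.integrableOn_of_bounded (M := |b| ^ α) (measure_ne_top ν _)
    (Real.continuous_rpow_const hα.le).aestronglyMeasurable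
  filter_upwards [ae_restrict_mem measurableSet_Ioc] with x hx
  have hx0 : 0 < x := lt_of_le_of_lt ha hx.1
  rw [Real.norm_eq_abs, abs_of_nonneg (Real.rpow_nonneg hx0.le α)]
  exact Real.rpow_le_rpow hx0.le (hx.2.trans (le_abs_self b)) hα.le

lemma wk_key_identity (α : ℝ) (hα : 0 < α) (ν : Measure ℝ) [IsProbabilityMeasure ν]
    (hν : ν (Set.Iic 0) = 0) (s : ℝ) (hs : 0 < s) :
    ∫ x, max (1 - x ^ α / s ^ α) 0 ∂ν
      = (ν (Set.Iic s)).toReal - s ^ (-α) * ∫ x in Set.Ioc 0 s, x ^ α ∂ν := by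
  have hsα : (0:ℝ) < s ^ α := Real.rpow_pos_of_pos hs α
  have hae : ∀ᵐ x ∂ν, max (1 - x ^ α / s ^ α) 0
      = Set.indicator (Set.Ioc 0 s) (fun x => 1 - x ^ α / s ^ α) x := by
    have h0 : ∀ᵐ x ∂ν, 0 < x := by
      rw [ae_iff]
      convert hν using 2
      ext x; simp [not_lt]
    filter_upwards [h0] with x hx
    rcases le_or_gt x s with hxs | hxs
    · rw [Set.indicator_of_mem (Set.mem_Ioc.mpr ⟨hx, hxs⟩)]
      have h1 : x ^ α ≤ s ^ α := Real.rpow_le_rpow hx.le hxs hα.le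
      have : x ^ α / s ^ α ≤ 1 := (div_le_one hsα).mpr h1
      rw [max_eq_left (by linarith)]
    · rw [Set.indicator_of_notMem (by simp [not_le.mpr hxs])]
      have h1 : s ^ α < x ^ α := Real.rpow_lt_rpow hs.le hxs hα
      have : 1 < x ^ α / s ^ α := (one_lt_div hsα).mpr h1
      rw [max_eq_right (by linarith)]
  rw [integral_congr_ae hae, integral_indicator measurableSet_Ioc]
  have hint2 : IntegrableOn (fun x => x ^ α / s ^ α) (Set.Ioc 0 s) ν :=
    (wk_rpow_integrableOn ν α hα 0 s le_rfl).div_const _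
  rw [integral_sub (integrableOn_const (C := (1:ℝ)) (measure_ne_top ν (Set.Ioc 0 s))) hint2,
    integral_div, integral_const]
  have hmeas : ν (Set.Iic s) = ν (Set.Ioc 0 s) := by
    rw [← Set.Iic_union_Ioc_eq_Iic hs.le,
      measure_union (Set.Iic_disjoint_Ioc le_rfl) measurableSet_Ioc, hν, zero_add]
  rw [hmeas, Real.rpow_neg hs.le, smul_eq_mul, mul_one, measureReal_def, Measure.restrict_apply_univ]
  ring

lemma wk_interval (α : ℝ) (hα : 0 < α) (ν : Measure ℝ) [IsProbabilityMeasure ν]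
    (a b : ℝ) (ha : 0 < a) (hab : a ≤ b) :
    a ^ α * (ν (Set.Ioc a b)).toReal ≤ ∫ x in Set.Ioc a b, x ^ α ∂ν ∧
    ∫ x in Set.Ioc a b, x ^ α ∂ν ≤ b ^ α * (ν (Set.Ioc a b)).toReal := by
  have hint := wk_rpow_integrableOn ν α hα a b ha.le
  have hc : ∀ c : ℝ, ∫ _ in Set.Ioc a b, c ∂ν = c * (ν (Set.Ioc a b)).toReal := by
    intro c
    rw [setIntegral_const, smul_eq_mul, mul_comm, measureReal_def]
  constructor
  · rw [← hc (a ^ α)]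
    refine setIntegral_mono_on (integrableOn_const (measure_ne_top ν _))
      hint measurableSet_Ioc fun x hx => ?_
    exact Real.rpow_le_rpow ha.le hx.1.le hα.le
  · rw [← hc (b ^ α)]
    refine setIntegral_mono_on hint (integrableOn_const (measure_ne_top ν _))
      measurableSet_Ioc fun x hx => ?_
    exact Real.rpow_le_rpow (ha.trans_le hx.1.le).le hx.2 hα.le

theorem williamson_inversion_derivative
    (α : ℝ) (hα : 0 < α) (ν : Measure ℝ) [IsProbabilityMeasure ν]
    (hν : ν (Set.Iic 0) = 0)
    (F G H : ℝ → ℝ)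
    (hF : ∀ t, F t = (ν (Set.Iic t)).toReal)
    (hG : ∀ t, G t = ∫ x, max (1 - x ^ α / t ^ α) 0 ∂ν)
    (hH : ∀ t, H t = ∫ x in Set.Ioc 0 t, x ^ α ∂ν)
    (t : ℝ) (ht : 0 < t) (g : ℝ) (hderiv : HasDerivAt G g t)
    (hcont : ContinuousAt F t) :
    F t = G t + (t / α) * g ∧ g = α * t ^ (-α - 1) * H t := by
  have hGFH : ∀ s, 0 < s → G s = F s - s ^ (-α) * H s := by
    intro s hs
    rw [hG, hF, hH, wk_key_identity α hα ν hν s hs]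
  have hFd : ∀ a b : ℝ, 0 < a → a ≤ b → F b - F a = (ν (Set.Ioc a b)).toReal := by
    intro a b ha hab
    rw [hF, hF, ← Set.Iic_union_Ioc_eq_Iic hab,
      measure_union (Set.Iic_disjoint_Ioc le_rfl) measurableSet_Ioc,
      ENNReal.toReal_add (measure_ne_top ν _) (measure_ne_top ν _)]
    ring
  have hHd : ∀ a b : ℝ, 0 < a → a ≤ b → H b - H a = ∫ x in Set.Ioc a b, x ^ α ∂ν := by
    intro a b ha hab
    rw [hH, hH, ← Set.Ioc_union_Ioc_eq_Ioc ha.le hab,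
      setIntegral_union (Set.Ioc_disjoint_Ioc_of_le le_rfl) measurableSet_Ioc
        (wk_rpow_integrableOn ν α hα 0 a le_rfl) (wk_rpow_integrableOn ν α hα a b ha.le)]
    ring
  have hbound : ∀ s, 0 < s →
      |G s - F t + s ^ (-α) * H t| ≤ s ^ (-α) * |s ^ α - t ^ α| * |F s - F t| := by
    intro s hs
    have hP : (0:ℝ) < s ^ (-α) := Real.rpow_pos_of_pos hs _
    have hPs : s ^ (-α) * s ^ α = 1 := by
      rw [← Real.rpow_add hs]
      simp
    rcases le_total t s with hts | hst
    · obtain ⟨hI1, hI2⟩ := wk_interval α hα ν t s ht hts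
      have hD := hFd t s ht hts
      have hX : G s - F t + s ^ (-α) * H t
          = (F s - F t) - s ^ (-α) * ∫ x in Set.Ioc t s, x ^ α ∂ν := by
        rw [hGFH s hs, ← hHd t s ht hts]
        ring
      have hts' : t ^ α ≤ s ^ α := Real.rpow_le_rpow ht.le hts hα.le
      rw [hX, hD, abs_of_nonneg ENNReal.toReal_nonneg, abs_of_nonneg (sub_nonneg.mpr hts')]
      set D := (ν (Set.Ioc t s)).toReal with hDdef
      set I := ∫ x in Set.Ioc t s, x ^ α ∂ν with hIdef
      have h1 : s ^ (-α) * I ≤ D := by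
        calc s ^ (-α) * I ≤ s ^ (-α) * (s ^ α * D) := by
              exact mul_le_mul_of_nonneg_left hI2 hP.le
          _ = (s ^ (-α) * s ^ α) * D := by ring
          _ = D := by rw [hPs, one_mul]
      have h2 : s ^ (-α) * t ^ α * D ≤ s ^ (-α) * I := by
        have := mul_le_mul_of_nonneg_left hI1 hP.le
        linarith [this]
      have hexp : s ^ (-α) * (s ^ α - t ^ α) * D = D - s ^ (-α) * t ^ α * D := by
        linear_combination D * hPs
      rw [abs_le]
      constructor
      · linarith
      · linarith
    · obtain ⟨hI1, hI2⟩ := wk_interval α hα ν s t hs hst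
      have hD := hFd s t hs hst
      have hX : G s - F t + s ^ (-α) * H t
          = (s ^ (-α) * ∫ x in Set.Ioc s t, x ^ α ∂ν) - (F t - F s) := by
        rw [hGFH s hs, ← hHd s t hs hst]
        ring
      have hst' : s ^ α ≤ t ^ α := Real.rpow_le_rpow hs.le hst hα.le
      have habs1 : |s ^ α - t ^ α| = t ^ α - s ^ α := by
        rw [abs_sub_comm, abs_of_nonneg (sub_nonneg.mpr hst')]
      have habs2 : |F s - F t| = F t - F s := by
        rw [abs_sub_comm, abs_of_nonneg (by rw [hD]; exact ENNReal.toReal_nonneg)]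
      rw [hX, habs1, habs2, hD]
      set D := (ν (Set.Ioc s t)).toReal with hDdef
      set I := ∫ x in Set.Ioc s t, x ^ α ∂ν with hIdef
      have h1 : D ≤ s ^ (-α) * I := by
        calc D = (s ^ (-α) * s ^ α) * D := by rw [hPs, one_mul]
          _ = s ^ (-α) * (s ^ α * D) := by ring
          _ ≤ s ^ (-α) * I := mul_le_mul_of_nonneg_left hI1 hP.le
      have h2 : s ^ (-α) * I ≤ s ^ (-α) * t ^ α * D := by
        have := mul_le_mul_of_nonneg_left hI2 hP.le
        linarith [this]
      have hexp : s ^ (-α) * (t ^ α - s ^ α) * D = s ^ (-α) * t ^ α * D - D := by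
        linear_combination (-D) * hPs
      rw [abs_le]
      constructor
      · linarith
      · linarith
  -- derivative computations
  have hrpow : HasDerivAt (fun x : ℝ => x ^ α) (α * t ^ (α - 1)) t :=
    Real.hasDerivAt_rpow_const (Or.inl ht.ne')
  have hrpow' : HasDerivAt (fun x : ℝ => x ^ (-α)) (-α * t ^ (-α - 1)) t :=
    Real.hasDerivAt_rpow_const (Or.inl ht.ne')
  have hEd : HasDerivAt (fun s => G s - F t + s ^ (-α) * H t)
      (g + -α * t ^ (-α - 1) * H t) t :=
    (hderiv.sub_const _).add (hrpow'.mul_const _)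
  have hEt : G t - F t + t ^ (-α) * H t = 0 := by
    rw [hGFH t ht]
    ring
  have hE0 : HasDerivAt (fun s => G s - F t + s ^ (-α) * H t) 0 t := by
    rw [hasDerivAt_iff_tendsto_slope]
    have hB : Tendsto (fun s => s ^ (-α) * |slope (fun x : ℝ => x ^ α) t s| * |F s - F t|)
        (𝓝[≠] t) (𝓝 (t ^ (-α) * |α * t ^ (α - 1)| * 0)) := by
      refine Tendsto.mul (Tendsto.mul ?_ ?_) ?_
      · exact ((Real.continuousAt_rpow_const t (-α) (Or.inl ht.ne')).tendsto).mono_left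
          nhdsWithin_le_nhds
      · exact (continuous_abs.tendsto _).comp (hasDerivAt_iff_tendsto_slope.mp hrpow)
      · have h0 : Tendsto (fun s => |F s - F t|) (𝓝 t) (𝓝 |F t - F t|) :=
          (continuous_abs.tendsto _).comp (hcont.sub tendsto_const_nhds)
        simpa using h0.mono_left nhdsWithin_le_nhds
    rw [mul_zero] at hB
    refine squeeze_zero_norm' ?_ hB
    have hev : ∀ᶠ s in 𝓝[≠] t, 0 < s :=
      eventually_nhdsWithin_of_eventually_nhds (eventually_gt_nhds ht)
    filter_upwards [hev, self_mem_nhdsWithin] with s hs hst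
    have hst' : s - t ≠ 0 := sub_ne_zero.mpr hst
    rw [Real.norm_eq_abs, slope_def_field, slope_def_field, hEt, sub_zero, abs_div, abs_div]
    rw [div_le_iff₀ (abs_pos.mpr hst')] at *
    calc |G s - F t + s ^ (-α) * H t| ≤ s ^ (-α) * |s ^ α - t ^ α| * |F s - F t| :=
          hbound s hs
      _ = s ^ (-α) * (|s ^ α - t ^ α| / |s - t|) * |F s - F t| * |s - t| := by
          field_simp
      _ = s ^ (-α) * (|(fun x : ℝ => x ^ α) s - (fun x : ℝ => x ^ α) t| / |s - t|) * |F s - F t| * |s - t| := rfl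
  have hkey : g + -α * t ^ (-α - 1) * H t = 0 := hEd.unique hE0
  have hg2 : g = α * t ^ (-α - 1) * H t := by linarith
  refine ⟨?_, hg2⟩
  have htt : t ^ (-α - 1) * t = t ^ (-α) := by
    rw [← Real.rpow_add_one ht.ne' (-α - 1)]
    ring_nf
  have h2 : (t / α) * g = t ^ (-α) * H t := by
    rw [hg2, ← htt]
    field_simp
  rw [h2, hGFH t ht]
  ring
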